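/- arXiv:2401.01086 — 5 statements merged into one kernel-verified Lean document; each statement's English description precedes it below -/
import Mathlib

section
/- Let μ and ν be finite positive Borel measures on ℝ^d satisfying Assumption 1. Then the infimum of φ⁺(ℝ^d) + φ⁻(ℝ^d) over all pairs (φ⁺, φ⁻) of finite positive Borel measures on ℝ^d with all moments finite satisfying φ⁺ − φ⁻ = μ − ν and, for all n ∈ ℕ, M_n(φ⁺) ⪯ M_n(μ) and M_n(φ⁻) ⪯ M_n(ν), equals ‖μ − ν‖_TV, and it is attained uniquely at the Hahn–Jordan decomposition (φ⁺*, φ⁻*) of μ − ν. -/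
open MeasureTheory Finset Filter

noncomputable section

/-- The monomial `x ↦ x^α`. -/
def mono (d : ℕ) (α : Fin d → ℕ) (x : Fin d → ℝ) : ℝ := ∏ i, x i ^ α i

/-- All moments of `μ` are finite. -/
def HasAllMoments {d : ℕ} (μ : Measure (Fin d → ℝ)) : Prop :=
  ∀ α : Fin d → ℕ, Integrable (mono d α) μ

/-- The moment `μ_α = ∫ x^α dμ`. -/
def mMom {d : ℕ} (μ : Measure (Fin d → ℝ)) (α : Fin d → ℕ) : ℝ := ∫ x, mono d α x ∂μ

instance fintypeIdx (d n : ℕ) : Fintype {α : Fin d → ℕ // ∑ i, α i ≤ n} :=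
  Fintype.ofInjective
    (fun a => (fun i => (⟨a.1 i,
        Nat.lt_succ_of_le (le_trans
          (Finset.single_le_sum (fun j _ => Nat.zero_le (a.1 j)) (Finset.mem_univ i)) a.2)⟩ :
        Fin (n+1))) : _ → (Fin d → Fin (n+1)))
    (fun a b h => by
      apply Subtype.ext
      funext i
      exact congrArg Fin.val (congrFun h i))

/-- Moment matrix of order `n` built from a moment function `m`. -/
def momMat (d n : ℕ) (m : (Fin d → ℕ) → ℝ) :
    Matrix {α : Fin d → ℕ // ∑ i, α i ≤ n} {α : Fin d → ℕ // ∑ i, α i ≤ n} ℝ :=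
  fun a b => m (a.1 + b.1)

/-- Carleman's condition. -/
def Carleman {d : ℕ} (μ : Measure (Fin d → ℝ)) : Prop :=
  ∀ i : Fin d, ¬ Summable (fun j : ℕ =>
    (∫ x, x i ^ (2 * (j + 1)) ∂μ) ^ (-(1 : ℝ) / (2 * (j + 1) : ℝ)))

/-- Positive part of the Hahn–Jordan decomposition of `μ - ν`. -/
def hjPos {d : ℕ} (μ ν : Measure (Fin d → ℝ)) [IsFiniteMeasure μ] [IsFiniteMeasure ν] :
    Measure (Fin d → ℝ) :=
  (μ.toSignedMeasure - ν.toSignedMeasure).toJordanDecomposition.posPart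

/-- Negative part of the Hahn–Jordan decomposition of `μ - ν`. -/
def hjNeg {d : ℕ} (μ ν : Measure (Fin d → ℝ)) [IsFiniteMeasure μ] [IsFiniteMeasure ν] :
    Measure (Fin d → ℝ) :=
  (μ.toSignedMeasure - ν.toSignedMeasure).toJordanDecomposition.negPart

/-- Total variation distance `‖μ - ν‖_TV` (as a real number). -/
def tvReal {d : ℕ} (μ ν : Measure (Fin d → ℝ)) [IsFiniteMeasure μ] [IsFiniteMeasure ν] : ℝ :=
  (hjPos μ ν Set.univ + hjNeg μ ν Set.univ).toReal

/-- Degree-`2n` pseudo-moment vectors. -/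
abbrev PV (d n : ℕ) := {α : Fin d → ℕ // ∑ i, α i ≤ 2 * n} → ℝ

/-- Moment matrix of a degree-`2n` pseudo-moment vector. -/
def pvMat (d n : ℕ) (φ : PV d n) :
    Matrix {α : Fin d → ℕ // ∑ i, α i ≤ n} {α : Fin d → ℕ // ∑ i, α i ≤ n} ℝ :=
  fun a b => φ ⟨a.1 + b.1, by
    have h : ∑ i, (a.1 + b.1) i = (∑ i, a.1 i) + ∑ i, b.1 i := by
      simp [Finset.sum_add_distrib]
    have ha := a.2
    have hb := b.2
    omega⟩

/-- The index `α = 0`. -/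
def zeroIdx (d n : ℕ) : {α : Fin d → ℕ // ∑ i, α i ≤ 2 * n} := ⟨0, by simp⟩

/-- Feasibility for the level-`n` semidefinite relaxation. -/
def Feas (d n : ℕ) (μ ν : Measure (Fin d → ℝ)) (φ ψ : PV d n) : Prop :=
  (∀ α, φ α - ψ α = mMom μ α.1 - mMom ν α.1) ∧
  (pvMat d n φ).PosSemidef ∧ (momMat d n (mMom μ) - pvMat d n φ).PosSemidef ∧
  (pvMat d n ψ).PosSemidef ∧ (momMat d n (mMom ν) - pvMat d n ψ).PosSemidef

/-- Values of the level-`n` semidefinite relaxation. -/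
def primalSet (d n : ℕ) (μ ν : Measure (Fin d → ℝ)) : Set ℝ :=
  {r | ∃ φ ψ : PV d n, Feas d n μ ν φ ψ ∧ r = φ (zeroIdx d n) + ψ (zeroIdx d n)}

/-- The optimal value `ρ_n` of the level-`n` semidefinite relaxation. -/
def rho (d n : ℕ) (μ ν : Measure (Fin d → ℝ)) : ℝ := sInf (primalSet d n μ ν)


/-- Assumption 1: all moments of `μ` and `ν` are finite, and there is `c > 0` with
`∫ exp(c|x_i|) dμ < ∞` and `∫ exp(c|x_i|) dν < ∞` for every coordinate `i`. -/
def Assumption1 {d : ℕ} (μ ν : Measure (Fin d → ℝ)) : Prop :=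
  HasAllMoments μ ∧ HasAllMoments ν ∧
  ∃ c : ℝ, 0 < c ∧ (∀ i : Fin d, Integrable (fun x => Real.exp (c * |x i|)) μ) ∧
    (∀ i : Fin d, Integrable (fun x => Real.exp (c * |x i|)) ν)

open scoped ENNReal


section AuxLemmas

open scoped ENNReal NNReal

lemma mono_add' {d : ℕ} (α β : Fin d → ℕ) (x : Fin d → ℝ) :
    mono d (α + β) x = mono d α x * mono d β x := by
  simp [mono, pow_add, Finset.prod_mul_distrib]

lemma mMom_add_measure' {d : ℕ} {μ ν : Measure (Fin d → ℝ)} (hμ : HasAllMoments μ)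
    (hν : HasAllMoments ν) (α : Fin d → ℕ) : mMom (μ + ν) α = mMom μ α + mMom ν α := by
  simp [mMom, integral_add_measure (hμ α) (hν α)]

lemma momMat_posSemidef' {d : ℕ} (n : ℕ) {ρ : Measure (Fin d → ℝ)} (hρ : HasAllMoments ρ) :
    (momMat d n (mMom ρ)).PosSemidef := by
  rw [Matrix.posSemidef_iff_dotProduct_mulVec]
  constructor
  · ext a b
    simp [Matrix.conjTranspose_apply, momMat, add_comm]
  · intro x
    have key : dotProduct (star x) ((momMat d n (mMom ρ)).mulVec x)
        = ∫ y, (∑ a : {α : Fin d → ℕ // ∑ i, α i ≤ n}, x a * mono d a.1 y)^2 ∂ρ := by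
      have hsq : ∀ y, (∑ a : {α : Fin d → ℕ // ∑ i, α i ≤ n}, x a * mono d a.1 y)^2
          = ∑ a : {α : Fin d → ℕ // ∑ i, α i ≤ n},
              ∑ b : {α : Fin d → ℕ // ∑ i, α i ≤ n}, x a * x b * mono d (a.1 + b.1) y := by
        intro y
        rw [sq, Finset.sum_mul_sum]
        refine Finset.sum_congr rfl fun a _ => Finset.sum_congr rfl fun b _ => ?_
        rw [mono_add']; ring
      simp only [hsq]
      rw [integral_finset_sum _ (fun a _ => integrable_finset_sum _
        (fun b _ => (hρ (a.1 + b.1)).const_mul (x a * x b)))]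
      simp only [integral_finset_sum _
        (fun b _ => ((hρ (_ + b.1)).const_mul (x _ * x b))), integral_const_mul]
      simp only [dotProduct, Matrix.mulVec, star_trivial, momMat, mMom]
      refine Finset.sum_congr rfl fun a _ => ?_
      rw [Finset.mul_sum]
      refine Finset.sum_congr rfl fun b _ => ?_
      ring
    rw [key]
    exact integral_nonneg fun y => sq_nonneg _

lemma momMat_sub_posSemidef' {d : ℕ} (n : ℕ) {ρ σ : Measure (Fin d → ℝ)} [IsFiniteMeasure ρ]
    (hρ : HasAllMoments ρ) (hle : σ ≤ ρ) :
    (momMat d n (mMom ρ) - momMat d n (mMom σ)).PosSemidef := by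
  haveI : IsFiniteMeasure σ :=
    ⟨lt_of_le_of_lt (Measure.le_iff'.mp hle Set.univ) (measure_lt_top ρ _)⟩
  have hσ : HasAllMoments σ := fun α => (hρ α).mono_measure hle
  have hτ : HasAllMoments (ρ - σ) := fun α => (hρ α).mono_measure Measure.sub_le
  have hcancel : ρ - σ + σ = ρ := Measure.sub_add_cancel_of_le hle
  have hM : momMat d n (mMom ρ) - momMat d n (mMom σ) = momMat d n (mMom (ρ - σ)) := by
    ext a b
    have h2 := mMom_add_measure' hτ hσ (a.1 + b.1)
    rw [hcancel] at h2
    simp only [Matrix.sub_apply, momMat]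
    linarith
  rw [hM]
  exact momMat_posSemidef' n hτ

lemma coe_mk_le' {r : ℝ} (h : 0 ≤ r) {c : ℝ≥0∞} (hrc : ENNReal.ofReal r ≤ c) :
    ENNReal.ofNNReal ⟨r, h⟩ ≤ c := by
  rw [ENNReal.ofReal_eq_coe_nnreal h] at hrc
  exact hrc

lemma hj_le' {α : Type*} [MeasurableSpace α] (μ ν φp φm : Measure α)
    [IsFiniteMeasure μ] [IsFiniteMeasure ν] [IsFiniteMeasure φp] [IsFiniteMeasure φm]
    (h : φp + ν = φm + μ) :
    (μ.toSignedMeasure - ν.toSignedMeasure).toJordanDecomposition.posPart ≤ φp ∧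
    (μ.toSignedMeasure - ν.toSignedMeasure).toJordanDecomposition.negPart ≤ φm := by
  set s := μ.toSignedMeasure - ν.toSignedMeasure with hs_def
  have hsA : ∀ A : Set α, MeasurableSet A → s A = (φp A).toReal - (φm A).toReal := by
    intro A hA
    have h1 : φp A + ν A = φm A + μ A := by
      rw [← Measure.add_apply, ← Measure.add_apply, h]
    have h2 : (φp A).toReal + (ν A).toReal = (φm A).toReal + (μ A).toReal := by
      rw [← ENNReal.toReal_add (measure_ne_top _ _) (measure_ne_top _ _),
        ← ENNReal.toReal_add (measure_ne_top _ _) (measure_ne_top _ _), h1]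
    rw [hs_def, MeasureTheory.VectorMeasure.sub_apply,
      Measure.toSignedMeasure_apply_measurable hA,
      Measure.toSignedMeasure_apply_measurable hA]
    simp only [measureReal_def]
    linarith
  obtain ⟨i, hi₁, hi₂, hi₃, hpos, hneg⟩ := s.toJordanDecomposition_spec
  constructor
  · rw [Measure.le_iff]
    intro A hA
    rw [hpos, SignedMeasure.toMeasureOfZeroLE_apply _ _ _ hA]
    have hm : MeasurableSet (i ∩ A) := hi₁.inter hA
    apply coe_mk_le'
    rw [hsA _ hm]
    calc ENNReal.ofReal ((φp (i ∩ A)).toReal - (φm (i ∩ A)).toReal)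
        ≤ ENNReal.ofReal ((φp (i ∩ A)).toReal) :=
          ENNReal.ofReal_le_ofReal (by simp [sub_le_self_iff, ENNReal.toReal_nonneg])
      _ = φp (i ∩ A) := ENNReal.ofReal_toReal (measure_ne_top _ _)
      _ ≤ φp A := measure_mono Set.inter_subset_right
  · rw [Measure.le_iff]
    intro A hA
    rw [hneg, SignedMeasure.toMeasureOfLEZero_apply _ _ _ hA]
    have hm : MeasurableSet (iᶜ ∩ A) := hi₁.compl.inter hA
    apply coe_mk_le'
    rw [hsA _ hm]
    calc ENNReal.ofReal (-((φp (iᶜ ∩ A)).toReal - (φm (iᶜ ∩ A)).toReal))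
        ≤ ENNReal.ofReal ((φm (iᶜ ∩ A)).toReal) :=
          ENNReal.ofReal_le_ofReal (by simp [sub_le_self_iff, ENNReal.toReal_nonneg])
      _ = φm (iᶜ ∩ A) := ENNReal.ofReal_toReal (measure_ne_top _ _)
      _ ≤ φm A := measure_mono Set.inter_subset_right

lemma hj_balance' {α : Type*} [MeasurableSpace α] (μ ν : Measure α)
    [IsFiniteMeasure μ] [IsFiniteMeasure ν] :
    (μ.toSignedMeasure - ν.toSignedMeasure).toJordanDecomposition.posPart + ν =
    (μ.toSignedMeasure - ν.toSignedMeasure).toJordanDecomposition.negPart + μ := by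
  set s := μ.toSignedMeasure - ν.toSignedMeasure with hs_def
  haveI := s.toJordanDecomposition.posPart_finite
  haveI := s.toJordanDecomposition.negPart_finite
  rw [← Measure.toSignedMeasure_eq_toSignedMeasure_iff,
    Measure.toSignedMeasure_add, Measure.toSignedMeasure_add]
  have hkey : s.toJordanDecomposition.posPart.toSignedMeasure -
      s.toJordanDecomposition.negPart.toSignedMeasure =
      μ.toSignedMeasure - ν.toSignedMeasure := s.toSignedMeasure_toJordanDecomposition
  have h2 := sub_eq_sub_iff_add_eq_add.mp hkey
  rw [h2]; abel

lemma meas_eq_of_le_univ' {α : Type*} [MeasurableSpace α] {ρ σ : Measure α} [IsFiniteMeasure σ]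
    (h : ρ ≤ σ) (hu : σ Set.univ ≤ ρ Set.univ) : ρ = σ := by
  have hfin : ∀ A : Set α, ρ A ≠ ⊤ := fun A =>
    ne_top_of_le_ne_top (measure_ne_top σ A) (Measure.le_iff'.mp h A)
  ext A hA
  have t1 : (ρ A).toReal ≤ (σ A).toReal :=
    (ENNReal.toReal_le_toReal (hfin A) (measure_ne_top _ _)).mpr (Measure.le_iff'.mp h A)
  have t2 : (ρ Aᶜ).toReal ≤ (σ Aᶜ).toReal :=
    (ENNReal.toReal_le_toReal (hfin Aᶜ) (measure_ne_top _ _)).mpr (Measure.le_iff'.mp h Aᶜ)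
  have tu : (σ Set.univ).toReal ≤ (ρ Set.univ).toReal :=
    (ENNReal.toReal_le_toReal (measure_ne_top _ _) (hfin _)).mpr hu
  have hρu : (ρ A).toReal + (ρ Aᶜ).toReal = (ρ Set.univ).toReal := by
    rw [← ENNReal.toReal_add (hfin A) (hfin Aᶜ), measure_add_measure_compl hA]
  have hσu : (σ A).toReal + (σ Aᶜ).toReal = (σ Set.univ).toReal := by
    rw [← ENNReal.toReal_add (measure_ne_top _ _) (measure_ne_top _ _),
      measure_add_measure_compl hA]
  have h3 : (ρ A).toReal = (σ A).toReal := by linarith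
  exact (ENNReal.toReal_eq_toReal_iff' (hfin A) (measure_ne_top _ _)).mp h3

end AuxLemmas

/-- Under Assumption 1, the infimum of `φ⁺(ℝ^d) + φ⁻(ℝ^d)` over pairs of finite
positive measures with all moments finite, `φ⁺ - φ⁻ = μ - ν`, and moment-matrix dominations
`M_n(φ⁺) ⪯ M_n(μ)`, `M_n(φ⁻) ⪯ M_n(ν)` for all `n`, equals `‖μ - ν‖_TV`, attained uniquely
at the Hahn–Jordan decomposition of `μ - ν`. -/
theorem tv_eq_inf_momentMatrix_dominated (d : ℕ) (μ ν : Measure (Fin d → ℝ))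
    [IsFiniteMeasure μ] [IsFiniteMeasure ν] (hA : Assumption1 μ ν) :
    IsLeast {r : ℝ≥0∞ | ∃ φp φm : Measure (Fin d → ℝ),
        IsFiniteMeasure φp ∧ IsFiniteMeasure φm ∧
        HasAllMoments φp ∧ HasAllMoments φm ∧ φp + ν = φm + μ ∧
        (∀ n : ℕ, (momMat d n (mMom μ) - momMat d n (mMom φp)).PosSemidef) ∧
        (∀ n : ℕ, (momMat d n (mMom ν) - momMat d n (mMom φm)).PosSemidef) ∧
        r = φp Set.univ + φm Set.univ}
      (hjPos μ ν Set.univ + hjNeg μ ν Set.univ) ∧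
    (∀ φp φm : Measure (Fin d → ℝ), IsFiniteMeasure φp → IsFiniteMeasure φm →
      HasAllMoments φp → HasAllMoments φm → φp + ν = φm + μ →
      (∀ n : ℕ, (momMat d n (mMom μ) - momMat d n (mMom φp)).PosSemidef) →
      (∀ n : ℕ, (momMat d n (mMom ν) - momMat d n (mMom φm)).PosSemidef) →
      φp Set.univ + φm Set.univ = hjPos μ ν Set.univ + hjNeg μ ν Set.univ →
      φp = hjPos μ ν ∧ φm = hjNeg μ ν) := by
  haveI hfin1 : IsFiniteMeasure (hjPos μ ν) :=
    (μ.toSignedMeasure - ν.toSignedMeasure).toJordanDecomposition.posPart_finite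
  haveI hfin2 : IsFiniteMeasure (hjNeg μ ν) :=
    (μ.toSignedMeasure - ν.toSignedMeasure).toJordanDecomposition.negPart_finite
  have hbal : hjPos μ ν + ν = hjNeg μ ν + μ := hj_balance' μ ν
  have hle2 := hj_le' μ ν μ ν (add_comm μ ν)
  have hleμ : hjPos μ ν ≤ μ := hle2.1
  have hleν : hjNeg μ ν ≤ ν := hle2.2
  obtain ⟨hμm, hνm, -⟩ := hA
  constructor
  · constructor
    · exact ⟨hjPos μ ν, hjNeg μ ν, hfin1, hfin2,
        fun α => (hμm α).mono_measure hleμ, fun α => (hνm α).mono_measure hleν, hbal,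
        fun n => momMat_sub_posSemidef' n hμm hleμ,
        fun n => momMat_sub_posSemidef' n hνm hleν, rfl⟩
    · rintro r ⟨φp, φm, hf1, hf2, -, -, hbal', -, -, rfl⟩
      haveI := hf1; haveI := hf2
      have h := hj_le' μ ν φp φm hbal'
      exact add_le_add (Measure.le_iff'.mp h.1 Set.univ) (Measure.le_iff'.mp h.2 Set.univ)
  · intro φp φm hf1 hf2 _ _ hbal' _ _ hsum
    haveI := hf1; haveI := hf2
    have h := hj_le' μ ν φp φm hbal'
    have e1 : (hjPos μ ν Set.univ).toReal ≤ (φp Set.univ).toReal :=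
      (ENNReal.toReal_le_toReal (measure_ne_top _ _) (measure_ne_top _ _)).mpr
        (Measure.le_iff'.mp h.1 Set.univ)
    have e2 : (hjNeg μ ν Set.univ).toReal ≤ (φm Set.univ).toReal :=
      (ENNReal.toReal_le_toReal (measure_ne_top _ _) (measure_ne_top _ _)).mpr
        (Measure.le_iff'.mp h.2 Set.univ)
    have esum : (φp Set.univ).toReal + (φm Set.univ).toReal =
        (hjPos μ ν Set.univ).toReal + (hjNeg μ ν Set.univ).toReal := by
      rw [← ENNReal.toReal_add (measure_ne_top _ _) (measure_ne_top _ _),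
        ← ENNReal.toReal_add (measure_ne_top _ _) (measure_ne_top _ _), hsum]
    have hu1 : φp Set.univ ≤ hjPos μ ν Set.univ :=
      (ENNReal.toReal_le_toReal (measure_ne_top _ _) (measure_ne_top _ _)).mp (by linarith)
    have hu2 : φm Set.univ ≤ hjNeg μ ν Set.univ :=
      (ENNReal.toReal_le_toReal (measure_ne_top _ _) (measure_ne_top _ _)).mp (by linarith)
    exact ⟨(meas_eq_of_le_univ' h.1 hu1).symm, (meas_eq_of_le_univ' h.2 hu2).symm⟩

end
end

section
/- Let μ be a finite positive Borel measure on ℝ^d with all moments finite, let n ∈ ℕ, and let φ = (φ_α)_{|α| ≤ 2n} be a degree-2n pseudo-moment vector with 0 ⪯ M_n(φ) ⪯ M_n(μ). Then |φ_α| ≤ max( μ(ℝ^d), max_{i=1,…,d} ∫ x_i^{2n} dμ ) for every α ∈ ℕ^d with |α| ≤ 2n. -/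
open MeasureTheory Finset Filter

noncomputable section

-- ===== auxiliary lemmas =====

lemma psd_diag_nonneg {m : Type*} [Fintype m] [DecidableEq m]
    {A : Matrix m m ℝ} (hA : A.PosSemidef) (a : m) : 0 ≤ A a a := by
  have h := hA.dotProduct_mulVec_nonneg (Pi.single a 1)
  simpa [Matrix.mulVec_single, single_dotProduct] using h

lemma psd_entry_sq_le {m : Type*} [Fintype m] [DecidableEq m]
    {A : Matrix m m ℝ} (hA : A.PosSemidef) (a b : m) :
    (A a b)^2 ≤ A a a * A b b := by
  have hsym : A b a = A a b := by
    have := congrFun (congrFun hA.1 a) b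
    simpa [Matrix.conjTranspose_apply] using this
  have hq : ∀ t : ℝ, 0 ≤ A a a * (t * t) + (2 * A a b) * t + A b b := by
    intro t
    have h := hA.dotProduct_mulVec_nonneg (t • (Pi.single a 1 : m → ℝ) + (Pi.single b 1 : m → ℝ))
    simp only [star_trivial, Matrix.mulVec_add, Matrix.mulVec_smul, Matrix.mulVec_single,
      dotProduct_add, add_dotProduct, smul_dotProduct,
      single_dotProduct, smul_eq_mul, mul_one, Pi.add_apply, Pi.smul_apply,
      dotProduct_single, MulOpposite.op_one, one_smul, one_mul, Matrix.col_apply] at h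
    rw [hsym] at h
    ring_nf at h ⊢
    linarith [h]
  have := discrim_le_zero hq
  rw [discrim] at this
  nlinarith [this]

lemma split_index (d n : ℕ) (α : Fin d → ℕ) (hα : ∑ i, α i ≤ 2 * n) :
    ∃ β γ : Fin d → ℕ, β + γ = α ∧ ∑ i, β i ≤ n ∧ ∑ i, γ i ≤ n := by
  classical
  set α' : ℕ → ℕ := fun i => if h : i < d then α ⟨i, h⟩ else 0 with hα'
  set f : ℕ → ℕ := fun j => min (∑ i ∈ range j, α' i) n with hf
  have hmono : ∀ j, f j ≤ f (j + 1) := by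
    intro j
    have hs : ∑ x ∈ range (j+1), α' x = ∑ x ∈ range j, α' x + α' j :=
      Finset.sum_range_succ _ _
    simp only [hf]; omega
  set β' : ℕ → ℕ := fun j => f (j + 1) - f j with hβ'
  have htel : ∀ m, ∑ j ∈ range m, β' j = f m := by
    intro m
    induction m with
    | zero => simp [hf]
    | succ m ih =>
      rw [Finset.sum_range_succ, ih]
      have := hmono m
      simp only [hβ']; omega
  set β : Fin d → ℕ := fun i => β' i.val with hβ
  have hrange : ∑ i ∈ range d, α' i = ∑ i : Fin d, α i := by
    rw [← Fin.sum_univ_eq_sum_range (fun j => α' j) d]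
    exact Finset.sum_congr rfl fun i _ => by simp [hα', i.isLt]
  have hβle : ∀ i : Fin d, β i ≤ α i := by
    intro i
    have h1 : α' i.val = α i := by simp [hα', i.isLt]
    have hs : ∑ x ∈ range (i.val+1), α' x = ∑ x ∈ range i.val, α' x + α' i.val :=
      Finset.sum_range_succ _ _
    simp only [hβ, hβ', hf]
    omega
  have hβsum : ∑ i : Fin d, β i = min (∑ i : Fin d, α i) n := by
    have h1 : ∑ i : Fin d, β i = ∑ j ∈ range d, β' j := by
      simp only [hβ]
      exact Fin.sum_univ_eq_sum_range (fun j => β' j) d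
    rw [h1, htel]
    simp only [hf, hrange]
  refine ⟨β, fun i => α i - β i, ?_, ?_, ?_⟩
  · funext i
    have := hβle i
    simp only [Pi.add_apply]
    omega
  · omega
  · show ∑ i : Fin d, (α i - β i) ≤ n
    have h1 : ∑ i : Fin d, (α i - β i) = ∑ i : Fin d, α i - ∑ i : Fin d, β i := by
      rw [eq_tsub_iff_add_eq_of_le, ← Finset.sum_add_distrib]
      · exact Finset.sum_congr rfl fun i _ => by have := hβle i; omega
      · exact Finset.sum_le_sum fun i _ => hβle i
    omega

lemma mono_single (d m : ℕ) (i : Fin d) :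
    mono d (Pi.single i m) = fun x => x i ^ m := by
  funext x
  rw [mono, Finset.prod_eq_single i]
  · simp
  · intro j _ hj; simp [Pi.single_eq_of_ne hj]
  · simp

lemma pointwise_amgm (d n : ℕ) (β : Fin d → ℕ) (hβ : ∑ i, β i ≤ n) (x : Fin d → ℝ) :
    mono d (β + β) x ≤
      (1 - (∑ i, (β i : ℝ)) / n) + ∑ i, ((β i : ℝ) / n) * x i ^ (2 * n) := by
  rcases Nat.eq_zero_or_pos n with hn | hn
  · have hβ0 : ∀ i, β i = 0 := by
      intro i
      have := Finset.single_le_sum (fun j _ => Nat.zero_le (β j)) (Finset.mem_univ i)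
      omega
    simp [mono, hβ0, hn]
  · classical
    set w : Option (Fin d) → ℝ := fun o => o.elim (1 - (∑ i, (β i : ℝ)) / n)
        (fun i => (β i : ℝ) / n) with hw
    set z : Option (Fin d) → ℝ := fun o => o.elim 1 (fun i => x i ^ (2 * n)) with hz
    have hkn : (∑ i, (β i : ℝ)) ≤ (n : ℝ) := by
      rw [← Nat.cast_sum]; exact_mod_cast hβ
    have hwnn : ∀ o ∈ Finset.univ, 0 ≤ w o := by
      rintro (_ | i) _
      · simp only [hw, Option.elim]
        have : (0:ℝ) < n := by exact_mod_cast hn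
        rw [sub_nonneg, div_le_one this]; exact hkn
      · simp only [hw, Option.elim]
        positivity
    have hwsum : ∑ o : Option (Fin d), w o = 1 := by
      rw [Fintype.sum_option]
      simp only [hw, Option.elim]
      rw [← Finset.sum_div]
      ring
    have hznn : ∀ o ∈ Finset.univ, 0 ≤ z o := by
      rintro (_ | i) _
      · simp [hz]
      · simp only [hz, Option.elim]
        rw [mul_comm, pow_mul]
        positivity
    have key := Real.geom_mean_le_arith_mean_weighted Finset.univ w z hwnn hwsum hznn
    rw [Fintype.prod_option, Fintype.sum_option] at key
    have hzw : ∀ i : Fin d, z (some i) ^ w (some i) = x i ^ (2 * β i) := by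
      intro i
      simp only [hz, hw, Option.elim]
      have hy : (0:ℝ) ≤ x i ^ 2 := sq_nonneg _
      have h1 : x i ^ (2 * n) = (x i ^ 2) ^ n := by rw [pow_mul]
      have h2 : x i ^ (2 * β i) = (x i ^ 2) ^ (β i) := by rw [pow_mul]
      rw [h1, h2, ← Real.rpow_natCast (x i ^ 2) n, ← Real.rpow_natCast (x i ^ 2) (β i),
        ← Real.rpow_mul hy]
      congr 1
      field_simp
    have hlhs : mono d (β + β) x = ∏ i : Fin d, z (some i) ^ w (some i) := by
      rw [mono]
      exact Finset.prod_congr rfl fun i _ => by rw [hzw i, Pi.add_apply, two_mul]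
    calc mono d (β + β) x = z none ^ w none * ∏ i : Fin d, z (some i) ^ w (some i) := by
          rw [hlhs]
          simp [hz, Real.one_rpow]
      _ ≤ w none * z none + ∑ i : Fin d, w (some i) * z (some i) := key
      _ = (1 - (∑ i, (β i : ℝ)) / n) + ∑ i, ((β i : ℝ) / n) * x i ^ (2 * n) := by
          simp [hw, hz, Option.elim]

lemma mom_le_max {d n : ℕ} (μ : Measure (Fin d → ℝ)) [IsFiniteMeasure μ]
    (hμ : HasAllMoments μ) (β : Fin d → ℕ) (hβ : ∑ i, β i ≤ n) :
    mMom μ (β + β) ≤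
      max ((μ Set.univ).toReal) (⨆ i : Fin d, ∫ x, x i ^ (2 * n) ∂μ) := by
  classical
  set C : ℝ := (μ Set.univ).toReal with hC
  set S : ℝ := ⨆ i : Fin d, ∫ x, x i ^ (2 * n) ∂μ with hS
  set M : ℝ := max C S with hM
  set k : ℝ := ∑ i, (β i : ℝ) with hk
  have hknn : 0 ≤ k := Finset.sum_nonneg fun i _ => Nat.cast_nonneg _
  have hkn : k ≤ (n : ℝ) := by
    rw [hk, ← Nat.cast_sum]; exact_mod_cast hβ
  have hCnn : 0 ≤ C := ENNReal.toReal_nonneg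
  have hInt : ∀ i : Fin d, Integrable (fun x : Fin d → ℝ => x i ^ (2 * n)) μ := by
    intro i
    have := hμ (Pi.single i (2 * n))
    rwa [mono_single] at this
  have hgInt : Integrable (fun x : Fin d → ℝ =>
      (1 - k / n) + ∑ i, ((β i : ℝ) / n) * x i ^ (2 * n)) μ := by
    apply Integrable.add (integrable_const _)
    apply integrable_finset_sum
    intro i _
    exact (hInt i).const_mul _
  have hmono : mMom μ (β + β) ≤
      ∫ x, ((1 - k / n) + ∑ i, ((β i : ℝ) / n) * x i ^ (2 * n)) ∂μ := by
    rw [mMom]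
    exact integral_mono (hμ (β + β)) hgInt (fun x => pointwise_amgm d n β hβ x)
  have hsplit : ∫ x, ((1 - k / n) + ∑ i, ((β i : ℝ) / n) * x i ^ (2 * n)) ∂μ
      = (1 - k / n) * C + ∑ i, ((β i : ℝ) / n) * ∫ x, x i ^ (2 * n) ∂μ := by
    rw [integral_add (integrable_const _) (integrable_finset_sum _
      fun i _ => (hInt i).const_mul _), integral_const,
      integral_finset_sum _ fun i _ => (hInt i).const_mul _]
    simp only [smul_eq_mul, mul_comm]
    congr 1
    exact Finset.sum_congr rfl fun i _ => integral_const_mul _ _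
  have hIle : ∀ i : Fin d, ∫ x, x i ^ (2 * n) ∂μ ≤ S := by
    intro i
    exact le_ciSup (f := fun i : Fin d => ∫ x, x i ^ (2 * n) ∂μ) (Set.Finite.bddAbove (Set.finite_range _)) i
  have hfinal : (1 - k / n) * C + ∑ i, ((β i : ℝ) / n) * ∫ x, x i ^ (2 * n) ∂μ ≤ M := by
    have h1 : (1 - k / n) * C ≤ (1 - k / n) * M := by
      apply mul_le_mul_of_nonneg_left (le_max_left _ _)
      rcases Nat.eq_zero_or_pos n with hn | hn
      · have : k = 0 := le_antisymm (by simpa [hn] using hkn) hknn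
        simp [this]
      · have hnpos : (0:ℝ) < n := by exact_mod_cast hn
        rw [sub_nonneg, div_le_one hnpos]; exact hkn
    have h2 : ∑ i, ((β i : ℝ) / n) * ∫ x, x i ^ (2 * n) ∂μ ≤ (k / n) * M := by
      have : ∑ i, ((β i : ℝ) / n) * M = (k / n) * M := by
        rw [hk, ← Finset.sum_mul, ← Finset.sum_div]
      rw [← this]
      apply Finset.sum_le_sum
      intro i _
      exact mul_le_mul_of_nonneg_left ((hIle i).trans (le_max_right _ _))
        (by positivity)
    have h3 : 0 ≤ k / n := by positivity
    have h4 : k / n ≤ 1 := by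
      rcases Nat.eq_zero_or_pos n with hn | hn
      · have : k = 0 := le_antisymm (by simpa [hn] using hkn) hknn
        simp [this]
      · have hnpos : (0:ℝ) < n := by exact_mod_cast hn
        rw [div_le_one hnpos]; exact hkn
    nlinarith [le_max_left C S, hCnn]
  calc mMom μ (β + β) ≤ _ := hmono
    _ = _ := hsplit
    _ ≤ M := hfinal


/-- If `φ` is a degree-`2n` pseudo-moment vector with
`0 ⪯ M_n(φ) ⪯ M_n(μ)`, then `|φ_α| ≤ max(μ(ℝ^d), max_i ∫ x_i^{2n} dμ)` for all `|α| ≤ 2n`. -/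
theorem pseudoMoment_bound (d n : ℕ) (μ : Measure (Fin d → ℝ)) [IsFiniteMeasure μ]
    (hμ : HasAllMoments μ) (φ : PV d n)
    (h0 : (pvMat d n φ).PosSemidef)
    (h1 : (momMat d n (mMom μ) - pvMat d n φ).PosSemidef) :
    ∀ α : {α : Fin d → ℕ // ∑ i, α i ≤ 2 * n},
      |φ α| ≤ max ((μ Set.univ).toReal) (⨆ i : Fin d, ∫ x, x i ^ (2 * n) ∂μ) := by
  intro α
  classical
  obtain ⟨β, γ, hβγ, hβn, hγn⟩ := split_index d n α.1 α.2
  set a : {α : Fin d → ℕ // ∑ i, α i ≤ n} := ⟨β, hβn⟩ with ha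
  set b : {α : Fin d → ℕ // ∑ i, α i ≤ n} := ⟨γ, hγn⟩ with hb
  set M : ℝ := max ((μ Set.univ).toReal) (⨆ i : Fin d, ∫ x, x i ^ (2 * n) ∂μ) with hMd
  have hM0 : (0:ℝ) ≤ M := le_trans ENNReal.toReal_nonneg (le_max_left _ _)
  have hφα : pvMat d n φ a b = φ α := by
    unfold pvMat
    congr 1
    exact Subtype.ext hβγ
  have haa_le : pvMat d n φ a a ≤ mMom μ (β + β) := by
    have h := psd_diag_nonneg h1 a
    rw [Matrix.sub_apply] at h
    have e : momMat d n (mMom μ) a a = mMom μ (β + β) := rfl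
    linarith [e ▸ h]
  have hbb_le : pvMat d n φ b b ≤ mMom μ (γ + γ) := by
    have h := psd_diag_nonneg h1 b
    rw [Matrix.sub_apply] at h
    have e : momMat d n (mMom μ) b b = mMom μ (γ + γ) := rfl
    linarith [e ▸ h]
  have haaM : pvMat d n φ a a ≤ M := haa_le.trans (mom_le_max μ hμ β hβn)
  have hbbM : pvMat d n φ b b ≤ M := hbb_le.trans (mom_le_max μ hμ γ hγn)
  have haa_nn : 0 ≤ pvMat d n φ a a := psd_diag_nonneg h0 a
  have hbb_nn : 0 ≤ pvMat d n φ b b := psd_diag_nonneg h0 b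
  have hsq := psd_entry_sq_le h0 a b
  have h2 : (φ α)^2 ≤ M^2 := by
    rw [← hφα]
    nlinarith
  calc |φ α| = Real.sqrt ((φ α)^2) := (Real.sqrt_sq_eq_abs _).symm
    _ ≤ Real.sqrt (M^2) := Real.sqrt_le_sqrt h2
    _ = M := Real.sqrt_sq hM0


end
end

section
/- Let p be a monic real polynomial of degree m in one variable, and let σ and τ be finite signed Borel measures on ℝ with all moments finite such that ∫ x^k p(x) dσ(x) = 0 and ∫ x^k p(x) dτ(x) = 0 for every k ∈ ℕ, and ∫ x^k dσ = ∫ x^k dτ for every k = 0, 1, …, 2m. Then ∫ x^k dσ = ∫ x^k dτ for every k ∈ ℕ. -/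
open MeasureTheory Finset Filter

noncomputable section

/-- Integral of `f` against a (finite) signed measure `σ`, via its Jordan decomposition. -/
def sInt (σ : SignedMeasure ℝ) (f : ℝ → ℝ) : ℝ :=
  ∫ x, f x ∂σ.toJordanDecomposition.posPart - ∫ x, f x ∂σ.toJordanDecomposition.negPart

lemma sInt_sum (σ : SignedMeasure ℝ)
    (hσint : ∀ k : ℕ, Integrable (fun x : ℝ => x ^ k) σ.totalVariation)
    (s : Finset ℕ) (c : ℕ → ℝ) (e : ℕ → ℕ) :
    sInt σ (fun x => ∑ i ∈ s, c i * x ^ e i) = ∑ i ∈ s, c i * sInt σ (fun x => x ^ e i) := by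
  have hpos : ∀ k : ℕ, Integrable (fun x : ℝ => x ^ k) σ.toJordanDecomposition.posPart :=
    fun k => (hσint k).left_of_add_measure
  have hneg : ∀ k : ℕ, Integrable (fun x : ℝ => x ^ k) σ.toJordanDecomposition.negPart :=
    fun k => (hσint k).right_of_add_measure
  unfold sInt
  rw [integral_finset_sum s (fun i _ => ((hpos (e i)).const_mul (c i))),
    integral_finset_sum s (fun i _ => ((hneg (e i)).const_mul (c i))), ← Finset.sum_sub_distrib]
  refine Finset.sum_congr rfl fun i _ => ?_
  rw [MeasureTheory.integral_const_mul, MeasureTheory.integral_const_mul, mul_sub]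

/-- If `p` is a monic polynomial of degree `m` and `σ, τ` are finite signed
measures on `ℝ` with all moments finite such that `∫ x^k p dσ = ∫ x^k p dτ = 0` for all
`k`, and `σ` and `τ` have the same moments up to degree `2m`, then they have the same
moments of every degree. -/
theorem moments_eq_of_eq_up_to_two_deg (m : ℕ) (p : Polynomial ℝ)
    (hmonic : p.Monic) (hdeg : p.natDegree = m)
    (σ τ : SignedMeasure ℝ)
    (hσint : ∀ k : ℕ, Integrable (fun x : ℝ => x ^ k) σ.totalVariation)
    (hτint : ∀ k : ℕ, Integrable (fun x : ℝ => x ^ k) τ.totalVariation)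
    (hσ : ∀ k : ℕ, sInt σ (fun x => x ^ k * p.eval x) = 0)
    (hτ : ∀ k : ℕ, sInt τ (fun x => x ^ k * p.eval x) = 0)
    (heq : ∀ k : ℕ, k ≤ 2 * m → sInt σ (fun x => x ^ k) = sInt τ (fun x => x ^ k)) :
    ∀ k : ℕ, sInt σ (fun x => x ^ k) = sInt τ (fun x => x ^ k) := by
  -- expansion of x^j * p(x)
  have hexp : ∀ (x : ℝ) (j : ℕ),
      x ^ j * p.eval x = ∑ i ∈ range (m + 1), p.coeff i * x ^ (j + i) := by
    intro x j
    rw [Polynomial.eval_eq_sum_range, hdeg, Finset.mul_sum]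
    refine Finset.sum_congr rfl fun i _ => ?_
    ring
  have key : ∀ (ν : SignedMeasure ℝ)
      (hint : ∀ k : ℕ, Integrable (fun x : ℝ => x ^ k) ν.totalVariation)
      (hν : ∀ k : ℕ, sInt ν (fun x => x ^ k * p.eval x) = 0) (j : ℕ),
      sInt ν (fun x => x ^ (j + m)) = -∑ i ∈ range m, p.coeff i * sInt ν (fun x => x ^ (j + i)) := by
    intro ν hint hν j
    have h0 := hν j
    have h1 : sInt ν (fun x => x ^ j * p.eval x)
        = ∑ i ∈ range (m + 1), p.coeff i * sInt ν (fun x => x ^ (j + i)) := by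
      rw [show (fun x : ℝ => x ^ j * p.eval x)
          = fun x => ∑ i ∈ range (m + 1), p.coeff i * x ^ (j + i) from funext fun x => hexp x j]
      exact sInt_sum ν hint _ _ _
    rw [h0] at h1
    rw [Finset.sum_range_succ] at h1
    have hc : p.coeff m = 1 := by rw [← hdeg]; exact hmonic.coeff_natDegree
    rw [hc, one_mul] at h1
    linarith
  intro k
  induction k using Nat.strong_induction_on with
  | _ k ih =>
    by_cases hk : k ≤ 2 * m
    · exact heq k hk
    · push_neg at hk
      have hm : m ≤ k := le_trans (Nat.le_mul_of_pos_left m (by norm_num)) hk.le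
      obtain ⟨j, rfl⟩ : ∃ j, k = j + m := ⟨k - m, (Nat.sub_add_cancel hm).symm⟩
      rw [key σ hσint hσ j, key τ hτint hτ j]
      congr 1
      refine Finset.sum_congr rfl fun i hi => ?_
      rw [ih (j + i) (by have := Finset.mem_range.mp hi; omega)]

end
end

section
/- Let μ be a finite positive Borel measure on ℝ supported on a set X of exactly m distinct points, let p(x) = ∏_{x' ∈ X} (x − x') with coefficient vector p ∈ ℝ^{m+1} in the monomial basis, and let φ = (φ_k)_{0 ≤ k ≤ 2m} be a degree-2m pseudo-moment vector with 0 ⪯ M_m(φ) ⪯ M_m(μ). Then M_m(φ) p = 0 and rank M_m(φ) = rank M_{m−1}(φ), where M_{m−1}(φ) is the upper-left m×m principal submatrix of M_m(φ). -/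
open MeasureTheory Finset Filter

noncomputable section

/-- The `k`-th moment `μ_k = ∫ x^k dμ` of a measure on `ℝ`. -/
def uMom (μ : Measure ℝ) (k : ℕ) : ℝ := ∫ x, x ^ k ∂μ

/-- The `(n+1) × (n+1)` Hankel moment matrix built from a moment function `m`. -/
def hMat (n : ℕ) (m : ℕ → ℝ) : Matrix (Fin (n + 1)) (Fin (n + 1)) ℝ :=
  fun i j => m (i.1 + j.1)

/-- Degree-`2n` pseudo-moment vectors (univariate). -/
abbrev uPV (n : ℕ) := Fin (2 * n + 1) → ℝ

/-- Hankel moment matrix of a degree-`2n` pseudo-moment vector. -/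
def uPMat (n : ℕ) (φ : uPV n) : Matrix (Fin (n + 1)) (Fin (n + 1)) ℝ :=
  fun i j => φ ⟨i.1 + j.1, by have hi := i.2; have hj := j.2; omega⟩

/-- Feasibility for the level-`n` semidefinite relaxation (univariate). -/
def uFeas (n : ℕ) (μ ν : Measure ℝ) (φ ψ : uPV n) : Prop :=
  (∀ k : Fin (2 * n + 1), φ k - ψ k = uMom μ k.1 - uMom ν k.1) ∧
  (uPMat n φ).PosSemidef ∧ (hMat n (uMom μ) - uPMat n φ).PosSemidef ∧
  (uPMat n ψ).PosSemidef ∧ (hMat n (uMom ν) - uPMat n ψ).PosSemidef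

/-- The optimal value `ρ_n` of the level-`n` semidefinite relaxation (univariate). -/
def uRho (n : ℕ) (μ ν : Measure ℝ) : ℝ :=
  sInf {r : ℝ | ∃ φ ψ : uPV n, uFeas n μ ν φ ψ ∧ r = φ 0 + ψ 0}

/-- Total variation distance `‖μ - ν‖_TV` of two finite measures on `ℝ`. -/
def uTV (μ ν : Measure ℝ) [IsFiniteMeasure μ] [IsFiniteMeasure ν] : ℝ :=
  ((μ.toSignedMeasure - ν.toSignedMeasure).toJordanDecomposition.posPart Set.univ
    + (μ.toSignedMeasure - ν.toSignedMeasure).toJordanDecomposition.negPart Set.univ).toReal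


lemma rank_drop_last {ι : Type*} [Fintype ι] {n : ℕ} (B : Matrix ι (Fin (n + 1)) ℝ)
    (v : Fin (n + 1) → ℝ) (hv : B.mulVec v = 0) (hlast : v (Fin.last n) = 1) :
    B.rank = (B.submatrix id (Fin.castSucc : Fin n → Fin (n + 1))).rank := by
  have key : ∀ y : Fin (n + 1) → ℝ, y (Fin.last n) = 0 →
      B.mulVec y = (B.submatrix id Fin.castSucc).mulVec (y ∘ Fin.castSucc) := by
    intro y hy
    funext i
    simp only [Matrix.mulVec, Matrix.submatrix_apply, id_eq, dotProduct]
    rw [Fin.sum_univ_castSucc]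
    simp [hy]
  have hrange : LinearMap.range B.mulVecLin
      = LinearMap.range (B.submatrix id (Fin.castSucc : Fin n → Fin (n + 1))).mulVecLin := by
    apply le_antisymm
    · rintro w ⟨x, rfl⟩
      refine ⟨(x - x (Fin.last n) • v) ∘ Fin.castSucc, ?_⟩
      rw [Matrix.mulVecLin_apply, Matrix.mulVecLin_apply, ← key _ (by simp [hlast]),
        Matrix.mulVec_sub, Matrix.mulVec_smul, hv]
      simp
    · rintro w ⟨z, rfl⟩
      refine ⟨Fin.snoc z 0, ?_⟩
      rw [Matrix.mulVecLin_apply, Matrix.mulVecLin_apply, key _ (by simp)]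
      congr 1
      funext j
      simp
  rw [Matrix.rank, Matrix.rank, hrange]

open Matrix in
/-- If `μ` is a finite measure on `ℝ` supported on a set `X` of exactly `m`
points, `p = ∏_{x' ∈ X} (X - x')` with coefficient vector `p ∈ ℝ^{m+1}`, and `φ` is a
degree-`2m` pseudo-moment vector with `0 ⪯ M_m(φ) ⪯ M_m(μ)`, then `M_m(φ) p = 0` and
`rank M_m(φ) = rank M_{m-1}(φ)`. -/
theorem kernel_and_flat_rank (m : ℕ) (μ : Measure ℝ) [IsFiniteMeasure μ]
    (X : Finset ℝ) (hcard : X.card = m)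
    (hsupp : μ (↑X : Set ℝ)ᶜ = 0) (hpos : ∀ x ∈ X, μ {x} ≠ 0)
    (φ : uPV m)
    (h0 : (uPMat m φ).PosSemidef)
    (h1 : (hMat m (uMom μ) - uPMat m φ).PosSemidef) :
    (uPMat m φ).mulVec
        (fun i : Fin (m + 1) => (∏ x' ∈ X, (Polynomial.X - Polynomial.C x')).coeff i.1) = 0 ∧
    (uPMat m φ).rank =
      ((uPMat m φ).submatrix (Fin.castSucc : Fin m → Fin (m + 1)) Fin.castSucc).rank := by
  classical
  set P : Polynomial ℝ := ∏ x' ∈ X, (Polynomial.X - Polynomial.C x') with hPdef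
  have hmonic : P.Monic :=
    Polynomial.monic_prod_of_monic _ _ fun x _ => Polynomial.monic_X_sub_C x
  have hdeg : P.natDegree = m := by
    rw [hPdef, Polynomial.natDegree_prod_of_monic _ _ fun x _ => Polynomial.monic_X_sub_C x]
    simp [hcard]
  set f : Fin (m + 1) → ℝ := fun i => P.coeff i.1 with hfdef
  have hlast : f (Fin.last m) = 1 := by
    show P.coeff (Fin.last m).1 = 1
    rw [Fin.val_last, ← hdeg]
    exact hmonic.coeff_natDegree
  have hae : ∀ᵐ x ∂μ, x ∈ (↑X : Set ℝ) := by
    rw [MeasureTheory.ae_iff]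
    exact hsupp
  have hint : ∀ k : ℕ, Integrable (fun x : ℝ => x ^ k) μ := by
    intro k
    refine Integrable.mono' (integrable_const (∑ x' ∈ X, ‖x' ^ k‖))
      ((continuous_pow k).aestronglyMeasurable) ?_
    filter_upwards [hae] with x hx
    exact Finset.single_le_sum (f := fun x' : ℝ => ‖x' ^ k‖) (fun _ _ => norm_nonneg _) hx
  have hsum : ∀ x ∈ (↑X : Set ℝ), ∑ i : Fin (m + 1), f i * x ^ i.1 = 0 := by
    intro x hx
    have h1' : P.eval x = 0 := by
      rw [hPdef, Polynomial.eval_prod]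
      exact Finset.prod_eq_zero hx (by simp)
    have h2 := Polynomial.eval_eq_sum_range' (p := P) (n := m + 1) (by omega) x
    rw [Fin.sum_univ_eq_sum_range (fun i => P.coeff i * x ^ i), ← h2, h1']
  set A := uPMat m φ with hA
  set M := hMat m (uMom μ) with hM
  have hquadM : dotProduct f (M.mulVec f) = 0 := by
    have expand : dotProduct f (M.mulVec f)
        = ∑ i : Fin (m + 1), ∑ j : Fin (m + 1), f i * f j * ∫ x, x ^ (i.1 + j.1) ∂μ := by
      simp only [dotProduct, Matrix.mulVec, hM, hMat, uMom, Finset.mul_sum]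
      exact Finset.sum_congr rfl fun i _ => Finset.sum_congr rfl fun j _ => by ring
    have swap : (∑ i : Fin (m + 1), ∑ j : Fin (m + 1), f i * f j * ∫ x, x ^ (i.1 + j.1) ∂μ)
        = ∫ x, ∑ i : Fin (m + 1), ∑ j : Fin (m + 1), f i * f j * x ^ (i.1 + j.1) ∂μ := by
      rw [integral_finset_sum _ (fun i _ =>
        integrable_finset_sum _ (fun j _ => (hint _).const_mul _))]
      refine Finset.sum_congr rfl fun i _ => ?_
      rw [integral_finset_sum _ (fun j _ => (hint _).const_mul _)]
      exact Finset.sum_congr rfl fun j _ => (integral_const_mul _ _).symm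
    have hzero : (∫ x, ∑ i : Fin (m + 1), ∑ j : Fin (m + 1), f i * f j * x ^ (i.1 + j.1) ∂μ)
        = 0 := by
      apply integral_eq_zero_of_ae
      filter_upwards [hae] with x hx
      have h := hsum x hx
      have : (∑ i : Fin (m + 1), ∑ j : Fin (m + 1), f i * f j * x ^ (i.1 + j.1))
          = (∑ i : Fin (m + 1), f i * x ^ i.1) * (∑ j : Fin (m + 1), f j * x ^ j.1) := by
        rw [Finset.sum_mul_sum]
        refine Finset.sum_congr rfl fun i _ => Finset.sum_congr rfl fun j _ => ?_
        rw [pow_add]; ring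
      simp only [Pi.zero_apply]
      rw [this, h, zero_mul]
    rw [expand, swap, hzero]
  have hAq : dotProduct f (A.mulVec f) = 0 := by
    have h0' := h0.dotProduct_mulVec_nonneg f
    have h1' := h1.dotProduct_mulVec_nonneg f
    rw [star_trivial] at h0' h1'
    rw [Matrix.sub_mulVec, dotProduct_sub] at h1'
    linarith
  have hker : A.mulVec f = 0 :=
    (h0.dotProduct_mulVec_zero_iff f).mp (by rwa [star_trivial])
  refine ⟨hker, ?_⟩
  have hsymm : Aᵀ = A := by
    ext i j
    show φ _ = φ _
    congr 1
    exact Fin.ext (Nat.add_comm _ _)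
  have step1 : A.rank = (A.submatrix id Fin.castSucc).rank := rank_drop_last A f hker hlast
  have step2 : (A.submatrix id Fin.castSucc).rank
      = (A.submatrix (Fin.castSucc : Fin m → Fin (m + 1)) id).rank := by
    rw [← Matrix.rank_transpose (A.submatrix id Fin.castSucc), Matrix.transpose_submatrix, hsymm]
  have hker2 : (A.submatrix (Fin.castSucc : Fin m → Fin (m + 1)) id).mulVec f = 0 := by
    funext i
    have := congrFun hker (Fin.castSucc i)
    simpa [Matrix.mulVec, dotProduct] using this
  have step3 : (A.submatrix (Fin.castSucc : Fin m → Fin (m + 1)) id).rank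
      = ((A.submatrix (Fin.castSucc : Fin m → Fin (m + 1)) id).submatrix id Fin.castSucc).rank :=
    rank_drop_last _ f hker2 hlast
  rw [step1, step2, step3, Matrix.submatrix_submatrix]
  simp


end
end

section
/- Let x(1), …, x(m) be distinct real numbers, let μ = Σ_{i=1}^m a_i δ_{x(i)} with a_i > 0 and φ = Σ_{i=1}^m a'_i δ_{x(i)} with a'_i ≥ 0, and let n ≥ m − 1. If M_n(φ) ⪯ M_n(μ), then a'_i ≤ a_i for every i = 1, …, m; in particular φ ≤ μ. -/
open MeasureTheory Finset Filter

noncomputable section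

open Matrix Polynomial

lemma integrable_dirac'' {f : ℝ → ℝ} (hf : Measurable f) (y : ℝ) :
    Integrable f (Measure.dirac y) := by
  refine ⟨hf.aestronglyMeasurable, ?_⟩
  rw [HasFiniteIntegral, lintegral_dirac]
  exact ENNReal.coe_lt_top

lemma uMom_atomic (m : ℕ) (c : Fin m → ℝ) (hc : ∀ i, 0 ≤ c i) (x : Fin m → ℝ) (k : ℕ) :
    (∫ t, t ^ k ∂(∑ i : Fin m, (ENNReal.ofReal (c i)) • Measure.dirac (x i)))
      = ∑ i, c i * x i ^ k := by
  rw [integral_finset_sum_measure (fun i _ =>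
    (integrable_dirac'' (by measurability) (x i)).smul_measure ENNReal.ofReal_ne_top)]
  refine Finset.sum_congr rfl fun i _ => ?_
  rw [integral_smul_measure, integral_dirac, ENNReal.toReal_ofReal (hc i)]
  simp [mul_comm]

lemma quad_form (n m : ℕ) (c : Fin m → ℝ) (x : Fin m → ℝ) (v : Fin (n+1) → ℝ) :
    v ⬝ᵥ (fun i j : Fin (n+1) => ∑ l, c l * x l ^ (i.1 + j.1)) *ᵥ v
      = ∑ l, c l * (∑ i : Fin (n+1), v i * x l ^ i.1)^2 := by
  have h : ∀ l, c l * (∑ i : Fin (n+1), v i * x l ^ i.1)^2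
      = ∑ i : Fin (n+1), ∑ j : Fin (n+1), v i * (c l * (x l ^ i.1 * x l ^ j.1) * v j) := by
    intro l
    rw [sq, Finset.sum_mul_sum, Finset.mul_sum]
    refine Finset.sum_congr rfl fun i _ => ?_
    rw [Finset.mul_sum]
    exact Finset.sum_congr rfl fun j _ => by ring
  simp only [dotProduct, Matrix.mulVec, Finset.mul_sum, Finset.sum_mul, pow_add, h]
  calc (∑ i : Fin (n+1), ∑ j : Fin (n+1), ∑ l : Fin m, v i * (c l * (x l ^ i.1 * x l ^ j.1) * v j))
      = ∑ i : Fin (n+1), ∑ l : Fin m, ∑ j : Fin (n+1), v i * (c l * (x l ^ i.1 * x l ^ j.1) * v j) :=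
        Finset.sum_congr rfl fun i _ => Finset.sum_comm
    _ = ∑ l : Fin m, ∑ i : Fin (n+1), ∑ j : Fin (n+1), v i * (c l * (x l ^ i.1 * x l ^ j.1) * v j) :=
        Finset.sum_comm

/-- Let `μ = Σ a_i δ_{x_i}` with `a_i > 0` and `φ = Σ a'_i δ_{x_i}` with
`a'_i ≥ 0`, the `x_i` distinct, and `n ≥ m - 1`. If `M_n(φ) ⪯ M_n(μ)` then `a'_i ≤ a_i`
for every `i`; in particular `φ ≤ μ`. -/
theorem atomic_momentMatrix_domination (m n : ℕ) (hn : m - 1 ≤ n)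
    (x : Fin m → ℝ) (hx : Function.Injective x)
    (a a' : Fin m → ℝ) (ha : ∀ i, 0 < a i) (ha' : ∀ i, 0 ≤ a' i)
    (μ φ : Measure ℝ)
    (hμ : μ = ∑ i : Fin m, (ENNReal.ofReal (a i)) • Measure.dirac (x i))
    (hφ : φ = ∑ i : Fin m, (ENNReal.ofReal (a' i)) • Measure.dirac (x i))
    (hM : (hMat n (uMom μ) - hMat n (uMom φ)).PosSemidef) :
    (∀ i, a' i ≤ a i) ∧ φ ≤ μ := by
  have key : ∀ i, a' i ≤ a i := by
    intro i₀
    set p : Polynomial ℝ := Lagrange.basis Finset.univ x i₀ with hp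
    have hinj : Set.InjOn x (Finset.univ : Finset (Fin m)) := hx.injOn
    have hdeg : p.natDegree = m - 1 := by
      rw [hp, Lagrange.natDegree_basis hinj (Finset.mem_univ i₀), Finset.card_univ,
        Fintype.card_fin]
    set v : Fin (n+1) → ℝ := fun j => p.coeff j.1 with hv
    have heval : ∀ t : ℝ, (∑ j : Fin (n+1), v j * t ^ j.1) = p.eval t := by
      intro t
      rw [Polynomial.eval_eq_sum_range' (by omega : p.natDegree < n + 1),
        ← Fin.sum_univ_eq_sum_range]
    have hMeq : hMat n (uMom μ) - hMat n (uMom φ)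
        = fun i j : Fin (n+1) => ∑ l, (a l - a' l) * x l ^ (i.1 + j.1) := by
      funext i j
      simp only [Matrix.sub_apply, hMat, uMom, hμ, hφ,
        uMom_atomic m a (fun i => (ha i).le) x, uMom_atomic m a' ha' x,
        ← Finset.sum_sub_distrib, sub_mul]
    have hpos := hM.dotProduct_mulVec_nonneg v
    rw [hMeq, star_trivial, quad_form] at hpos
    have hsum : (∑ l, (a l - a' l) * (∑ i : Fin (n+1), v i * x l ^ i.1)^2)
        = a i₀ - a' i₀ := by
      rw [Finset.sum_eq_single i₀]
      · rw [heval, hp, Lagrange.eval_basis_self hinj (Finset.mem_univ i₀)]; ring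
      · intro l _ hl
        rw [heval, hp, Lagrange.eval_basis_of_ne (Ne.symm hl) (Finset.mem_univ l)]
        ring
      · exact fun h => absurd (Finset.mem_univ i₀) h
    rw [hsum] at hpos
    linarith
  refine ⟨key, ?_⟩
  rw [hμ, hφ]
  refine Measure.le_iff.2 fun s hs => ?_
  rw [Measure.finset_sum_apply, Measure.finset_sum_apply]
  refine Finset.sum_le_sum fun i _ => ?_
  simp only [Measure.smul_apply, smul_eq_mul]
  exact mul_le_mul_left (ENNReal.ofReal_le_ofReal (key i)) _

end
end
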